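/- Let n ≥ 0 and 0 < ρ < 1, and define the Mehler kernel G : ℝ^{n+1} × ℝ^{n+1} → ℝ by G(x,y) := (1−ρ²)^{−(n+1)/2} (2π)^{−(n+1)} exp((−‖x‖² − ‖y‖² + 2ρ⟨x,y⟩)/(2(1−ρ²))). Then G is positive semidefinite: for every p ≥ 1, all points z⁽¹⁾, …, z⁽ᵖ⁾ ∈ ℝ^{n+1} and all reals β₁, …, β_p, Σ_{i,j=1}^p β_i β_j G(z⁽ⁱ⁾, z⁽ʲ⁾) ≥ 0. Consequently, for every locally finite Borel measure μ on ℝ^{n+1} and every continuous, compactly supported f : ℝ^{n+1} → ℝ, ∫∫ G(x,y) f(x) f(y) dμ(x) dμ(y) ≥ 0. -/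

import Mathlib

open MeasureTheory Real Set Filter
open scoped RealInnerProductSpace ENNReal

noncomputable section

/-- `ℝ^k` with the Euclidean structure. -/
abbrev Euc (k : ℕ) : Type := EuclideanSpace ℝ (Fin k)

/-- Standard Gaussian density on `ℝ^k`. -/
def gaussDensity (k : ℕ) (x : Euc k) : ℝ :=
  (2 * π) ^ (-(k : ℝ) / 2) * Real.exp (-‖x‖ ^ 2 / 2)

/-- Standard Gaussian measure on `ℝ^k`. -/
def gaussMeasure (k : ℕ) : Measure (Euc k) :=
  volume.withDensity fun x => ENNReal.ofReal (gaussDensity k x)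

/-- Ornstein–Uhlenbeck operator with correlation `ρ`. -/
def ouOp (k : ℕ) (ρ : ℝ) (f : Euc k → ℝ) (x : Euc k) : ℝ :=
  ∫ y, f (ρ • x + Real.sqrt (1 - ρ ^ 2) • y) ∂(gaussMeasure k)

/-- Noise stability of a set with correlation `ρ`. -/
def noiseStability (k : ℕ) (ρ : ℝ) (Ω : Set (Euc k)) : ℝ :=
  ∫ x, Ω.indicator (fun _ => (1 : ℝ)) x * ouOp k ρ (Ω.indicator fun _ => (1 : ℝ)) x
    ∂(gaussMeasure k)

/-- A half space: `{x : ⟨x,u⟩ > t}` for a unit vector `u`. -/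
def IsHalfSpace (k : ℕ) (H : Set (Euc k)) : Prop :=
  ∃ (u : Euc k) (t : ℝ), ‖u‖ = 1 ∧ H = {x | t < ⟪x, u⟫}

/-- The standard Gaussian cumulative distribution function. -/
def Phi (t : ℝ) : ℝ := ∫ s in Iio t, (2 * π) ^ (-(1 : ℝ) / 2) * Real.exp (-s ^ 2 / 2)

/-- The Gaussian barycenter of `Ω ⊆ ℝ^k`. -/
def bary (k : ℕ) (Ω : Set (Euc k)) : Euc k := ∫ x in Ω, x ∂(gaussMeasure k)


section Aux

variable {k : ℕ}

lemma aux_integrable {b : ℝ} (hb : 0 < b) (c : ℝ) (w : Euc k) :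
    Integrable fun v : Euc k => Real.exp (-b * ‖v‖ ^ 2 + c * ⟪w, v⟫) := by
  have h := (GaussianFourier.integrable_cexp_neg_mul_sq_norm_add (V := Euc k)
    (b := (b : ℂ)) (by simpa using hb) (c : ℂ) w).re
  apply h.congr
  filter_upwards with v
  have : (-(b:ℂ) * (‖v‖:ℂ) ^ 2 + (c:ℂ) * (⟪w, v⟫ : ℝ)) = ((-b * ‖v‖ ^ 2 + c * ⟪w, v⟫ : ℝ) : ℂ) := by
    push_cast; ring
  rw [this, ← Complex.ofReal_exp]
  simp only [RCLike.re_to_complex, Complex.ofReal_re]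

lemma aux_integral {b : ℝ} (hb : 0 < b) (c : ℝ) (w : Euc k) :
    ∫ v : Euc k, Real.exp (-b * ‖v‖ ^ 2 + c * ⟪w, v⟫) =
      (π / b) ^ ((k : ℝ) / 2) * Real.exp (c ^ 2 * ‖w‖ ^ 2 / (4 * b)) := by
  have h := GaussianFourier.integral_cexp_neg_mul_sq_norm_add (V := Euc k)
    (b := (b : ℂ)) (by simpa using hb) (c : ℂ) w
  have hd : (Module.finrank ℝ (Euc k) : ℂ) = (k : ℂ) := by
    rw [finrank_euclideanSpace_fin]
  rw [← Complex.ofReal_inj]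
  calc ((∫ v : Euc k, Real.exp (-b * ‖v‖ ^ 2 + c * ⟪w, v⟫) : ℝ) : ℂ)
      = ∫ v : Euc k, Complex.exp (-(b:ℂ) * (‖v‖:ℂ) ^ 2 + (c:ℂ) * (⟪w, v⟫ : ℝ)) := by
        have hint : ∀ v : Euc k, Complex.exp (-(b:ℂ) * (‖v‖:ℂ) ^ 2 + (c:ℂ) * (⟪w, v⟫ : ℝ))
            = ((Real.exp (-b * ‖v‖ ^ 2 + c * ⟪w, v⟫) : ℝ) : ℂ) := by
          intro v
          rw [Complex.ofReal_exp]
          congr 1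
          push_cast; ring
        simp only [hint]
        exact (integral_ofReal (𝕜 := ℂ)).symm
    _ = ((π / b : ℂ)) ^ ((k : ℂ) / 2) * Complex.exp ((c:ℂ) ^ 2 * (‖w‖:ℂ) ^ 2 / (4 * b)) := by
        rw [h, hd]
    _ = (((π / b) ^ ((k : ℝ) / 2) * Real.exp (c ^ 2 * ‖w‖ ^ 2 / (4 * b)) : ℝ) : ℂ) := by
        have h1 : ((π / b : ℂ)) ^ ((k : ℂ) / 2) = (((π / b) ^ ((k : ℝ) / 2) : ℝ) : ℂ) := by
          rw [Complex.ofReal_cpow (by positivity)]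
          push_cast; ring_nf
        rw [h1]
        push_cast [Complex.ofReal_exp]
        ring

end Aux

section Gauss

variable {k : ℕ}

lemma gauss_one_expand (a : ℝ) (x w : Euc k) :
    Real.exp (-(a * ‖x - w‖ ^ 2)) =
      Real.exp (-(a * ‖x‖ ^ 2)) * Real.exp (-a * ‖w‖ ^ 2 + (2 * a) * ⟪x, w⟫) := by
  rw [← Real.exp_add]
  congr 1
  rw [norm_sub_sq_real]
  ring

lemma gauss_one_integrable {a : ℝ} (ha : 0 < a) (x : Euc k) :
    Integrable fun w : Euc k => Real.exp (-(a * ‖x - w‖ ^ 2)) := by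
  simp only [gauss_one_expand a x]
  exact (aux_integrable ha (2 * a) x).const_mul _

lemma gauss_one_integral {a : ℝ} (ha : 0 < a) (x : Euc k) :
    ∫ w : Euc k, Real.exp (-(a * ‖x - w‖ ^ 2)) = (π / a) ^ ((k : ℝ) / 2) := by
  simp only [gauss_one_expand a x]
  rw [integral_const_mul, aux_integral ha (2 * a) x, mul_left_comm]
  rw [show (2 * a) ^ 2 * ‖x‖ ^ 2 / (4 * a) = a * ‖x‖ ^ 2 by field_simp; ring]
  rw [← Real.exp_add]
  simp

lemma gauss_pair_expand (a : ℝ) (x y w : Euc k) :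
    Real.exp (-(a * ‖x - w‖ ^ 2)) * Real.exp (-(a * ‖y - w‖ ^ 2)) =
      Real.exp (-(a * ‖x‖ ^ 2) - a * ‖y‖ ^ 2) *
        Real.exp (-(2 * a) * ‖w‖ ^ 2 + (2 * a) * ⟪x + y, w⟫) := by
  rw [← Real.exp_add, ← Real.exp_add]
  congr 1
  rw [norm_sub_sq_real, norm_sub_sq_real, inner_add_left]
  ring

lemma gauss_pair_integrable {a : ℝ} (ha : 0 < a) (x y : Euc k) :
    Integrable fun w : Euc k =>
      Real.exp (-(a * ‖x - w‖ ^ 2)) * Real.exp (-(a * ‖y - w‖ ^ 2)) := by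
  simp only [gauss_pair_expand a x y]
  exact (aux_integrable (by positivity) (2 * a) (x + y)).const_mul _

lemma gauss_pair_integral {a : ℝ} (ha : 0 < a) (x y : Euc k) :
    ∫ w : Euc k, Real.exp (-(a * ‖x - w‖ ^ 2)) * Real.exp (-(a * ‖y - w‖ ^ 2)) =
      (π / (2 * a)) ^ ((k : ℝ) / 2) * Real.exp (-(a / 2) * ‖x - y‖ ^ 2) := by
  simp only [gauss_pair_expand a x y]
  rw [integral_const_mul, aux_integral (by positivity) (2 * a) (x + y), mul_left_comm,
    ← Real.exp_add]
  congr 2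
  rw [norm_add_sq_real, norm_sub_sq_real]
  field_simp
  ring

end Gauss

section Psi

variable {k : ℕ}

/-- Gaussian factor. -/
def gg (ρ : ℝ) (x : Euc k) : ℝ := Real.exp (-(‖x‖ ^ 2 / (2 * (1 + ρ))))

/-- Feature map for the Mehler kernel. -/
def psi (ρ a : ℝ) (x w : Euc k) : ℝ := gg ρ x * Real.exp (-(a * ‖x - w‖ ^ 2))

lemma gg_pos (ρ : ℝ) (x : Euc k) : 0 < gg ρ x := Real.exp_pos _

lemma gg_le_one {ρ : ℝ} (hρ : 0 < ρ) (x : Euc k) : gg ρ x ≤ 1 := by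
  rw [gg, Real.exp_le_one_iff]
  have : (0:ℝ) ≤ ‖x‖ ^ 2 / (2 * (1 + ρ)) := by positivity
  linarith

lemma psi_pos (ρ a : ℝ) (x w : Euc k) : 0 < psi ρ a x w :=
  mul_pos (gg_pos ρ x) (Real.exp_pos _)

lemma psi_le_exp {ρ : ℝ} (hρ : 0 < ρ) (a : ℝ) (x w : Euc k) :
    psi ρ a x w ≤ Real.exp (-(a * ‖x - w‖ ^ 2)) := by
  have h := gg_le_one hρ x
  have := (Real.exp_pos (-(a * ‖x - w‖ ^ 2))).le
  calc psi ρ a x w ≤ 1 * Real.exp (-(a * ‖x - w‖ ^ 2)) := by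
        exact mul_le_mul_of_nonneg_right h this
    _ = _ := one_mul _

lemma psi_le_one {ρ a : ℝ} (hρ : 0 < ρ) (ha : 0 ≤ a) (x w : Euc k) :
    psi ρ a x w ≤ 1 := by
  refine (psi_le_exp hρ a x w).trans ?_
  rw [Real.exp_le_one_iff]
  have : (0:ℝ) ≤ a * ‖x - w‖ ^ 2 := by positivity
  linarith

lemma psi_cont (ρ a : ℝ) : Continuous fun q : Euc k × Euc k => psi ρ a q.1 q.2 := by
  unfold psi gg
  fun_prop

lemma psi_cont_right (ρ a : ℝ) (x : Euc k) : Continuous fun w : Euc k => psi ρ a x w := by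
  unfold psi gg
  fun_prop

lemma psi_pair_integrable {ρ a : ℝ} (ha : 0 < a) (x y : Euc k) :
    Integrable fun w : Euc k => psi ρ a x w * psi ρ a y w := by
  have : (fun w : Euc k => psi ρ a x w * psi ρ a y w) = fun w =>
      (gg ρ x * gg ρ y) * (Real.exp (-(a * ‖x - w‖ ^ 2)) * Real.exp (-(a * ‖y - w‖ ^ 2))) := by
    funext w; simp only [psi]; ring
  rw [this]
  exact (gauss_pair_integrable ha x y).const_mul _

lemma psi_pair_integral {ρ a : ℝ} (ha : 0 < a) (x y : Euc k) :
    ∫ w : Euc k, psi ρ a x w * psi ρ a y w =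
      (gg ρ x * gg ρ y) *
        ((π / (2 * a)) ^ ((k : ℝ) / 2) * Real.exp (-(a / 2) * ‖x - y‖ ^ 2)) := by
  have : (fun w : Euc k => psi ρ a x w * psi ρ a y w) = fun w =>
      (gg ρ x * gg ρ y) * (Real.exp (-(a * ‖x - w‖ ^ 2)) * Real.exp (-(a * ‖y - w‖ ^ 2))) := by
    funext w; simp only [psi]; ring
  rw [this, integral_const_mul, gauss_pair_integral ha x y]

end Psi

section Rep

/-- Representation of the Mehler kernel via the feature map `psi`. -/
lemma mehler_rep (n : ℕ) (ρ : ℝ) (hρ0 : 0 < ρ) (hρ1 : ρ < 1) (x y : Euc (n + 1)) :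
    (1 - ρ ^ 2) ^ (-((n : ℝ) + 1) / 2) * (2 * π) ^ (-((n : ℝ) + 1)) *
        Real.exp ((-‖x‖ ^ 2 - ‖y‖ ^ 2 + 2 * ρ * ⟪x, y⟫) / (2 * (1 - ρ ^ 2))) =
      ((1 - ρ ^ 2) ^ (-((n : ℝ) + 1) / 2) * (2 * π) ^ (-((n : ℝ) + 1)) /
          (π / (2 * (ρ / (1 - ρ ^ 2)))) ^ (((n + 1 : ℕ) : ℝ) / 2)) *
        ∫ w, psi ρ (ρ / (1 - ρ ^ 2)) x w * psi ρ (ρ / (1 - ρ ^ 2)) y w := by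
  have h1 : (0:ℝ) < 1 - ρ ^ 2 := by nlinarith
  have h2 : (0:ℝ) < 1 + ρ := by linarith
  have ha : 0 < ρ / (1 - ρ ^ 2) := by positivity
  set a := ρ / (1 - ρ ^ 2) with hadef
  have hC : (0:ℝ) < (π / (2 * a)) ^ (((n + 1 : ℕ) : ℝ) / 2) := by positivity
  rw [psi_pair_integral ha x y]
  rw [show ((1 - ρ ^ 2) ^ (-((n : ℝ) + 1) / 2) * (2 * π) ^ (-((n : ℝ) + 1)) /
      (π / (2 * a)) ^ (((n + 1 : ℕ) : ℝ) / 2)) *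
      ((gg ρ x * gg ρ y) * ((π / (2 * a)) ^ (((n + 1 : ℕ) : ℝ) / 2) *
        Real.exp (-(a / 2) * ‖x - y‖ ^ 2))) =
      ((1 - ρ ^ 2) ^ (-((n : ℝ) + 1) / 2) * (2 * π) ^ (-((n : ℝ) + 1))) *
      (gg ρ x * (gg ρ y * Real.exp (-(a / 2) * ‖x - y‖ ^ 2))) from by
    field_simp]
  congr 1
  simp only [gg, ← Real.exp_add]
  congr 1
  rw [norm_sub_sq_real, hadef]
  field_simp
  ring

end Rep

section Parts

variable {n : ℕ} {ρ a d : ℝ}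

lemma part1 (ha : 0 < a) (hd : 0 ≤ d) (G : Euc (n + 1) → Euc (n + 1) → ℝ)
    (rep : ∀ x y : Euc (n + 1), G x y = d * ∫ w, psi ρ a x w * psi ρ a y w)
    (p : ℕ) (z : Fin p → Euc (n + 1)) (b : Fin p → ℝ) :
    0 ≤ ∑ i, ∑ j, b i * b j * G (z i) (z j) := by
  have hint : ∀ i j : Fin p, Integrable fun w : Euc (n + 1) =>
      (b i * psi ρ a (z i) w) * (b j * psi ρ a (z j) w) := by
    intro i j
    have : (fun w : Euc (n + 1) => (b i * psi ρ a (z i) w) * (b j * psi ρ a (z j) w))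
        = fun w => (b i * b j) * (psi ρ a (z i) w * psi ρ a (z j) w) := by
      funext w; ring
    rw [this]
    exact (psi_pair_integrable ha (z i) (z j)).const_mul _
  have hsum : ∫ w, (∑ i, b i * psi ρ a (z i) w) ^ 2 =
      ∑ i, ∑ j, b i * b j * ∫ w, psi ρ a (z i) w * psi ρ a (z j) w := by
    have e1 : (fun w : Euc (n + 1) => (∑ i, b i * psi ρ a (z i) w) ^ 2)
        = fun w => ∑ i, ∑ j, (b i * psi ρ a (z i) w) * (b j * psi ρ a (z j) w) := by
      funext w; rw [sq, Finset.sum_mul_sum]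
    rw [e1, integral_finset_sum _ (fun i _ => integrable_finset_sum _ (fun j _ => hint i j))]
    refine Finset.sum_congr rfl fun i _ => ?_
    rw [integral_finset_sum _ (fun j _ => hint i j)]
    refine Finset.sum_congr rfl fun j _ => ?_
    rw [← integral_const_mul]
    congr 1 with w
    ring
  have : ∑ i, ∑ j, b i * b j * G (z i) (z j)
      = d * ∫ w, (∑ i, b i * psi ρ a (z i) w) ^ 2 := by
    rw [hsum, Finset.mul_sum]
    refine Finset.sum_congr rfl fun i _ => ?_
    rw [Finset.mul_sum]
    refine Finset.sum_congr rfl fun j _ => ?_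
    rw [rep (z i) (z j)]
    ring
  rw [this]
  exact mul_nonneg hd (integral_nonneg fun w => sq_nonneg _)

/-- Feature map multiplied by `f`. -/
def FF {k : ℕ} (ρ a : ℝ) (f : Euc k → ℝ) (x w : Euc k) : ℝ := f x * psi ρ a x w

section Part2

variable {k : ℕ} {ρ a : ℝ} {f : Euc k → ℝ} {μ : Measure (Euc k)}

lemma FF_uncurry_cont (hf : Continuous f) (ρ a : ℝ) :
    Continuous (Function.uncurry (FF ρ a f)) := by
  show Continuous fun q : Euc k × Euc k => f q.1 * psi ρ a q.1 q.2
  exact (hf.comp continuous_fst).mul (psi_cont ρ a)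

lemma FF_cont_right (hf : Continuous f) (ρ a : ℝ) (x : Euc k) :
    Continuous fun w => FF ρ a f x w := by
  show Continuous fun w : Euc k => f x * psi ρ a x w
  exact continuous_const.mul (psi_cont_right ρ a x)

lemma FF_abs (ρ a : ℝ) (f : Euc k → ℝ) (x w : Euc k) :
    |FF ρ a f x w| = |f x| * psi ρ a x w := by
  simp only [FF, abs_mul, abs_of_pos (psi_pos ρ a x w)]

lemma S_meas (hf : Continuous f) (ρ a : ℝ) (μ : Measure (Euc k)) [SFinite μ] :
    StronglyMeasurable fun w : Euc k => ∫ y, FF ρ a f y w ∂μ :=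
  (((FF_uncurry_cont hf ρ a).comp continuous_swap).stronglyMeasurable).integral_prod_right'
    (ν := μ)

lemma S_bound (hρ0 : 0 < ρ) (ha : 0 < a) (hf : Continuous f) (hfc : HasCompactSupport f)
    [IsLocallyFiniteMeasure μ] (w : Euc k) :
    |∫ y, FF ρ a f y w ∂μ| ≤ ∫ y, |f y| ∂μ := by
  have hfi : Integrable f μ := hf.integrable_of_hasCompactSupport hfc
  have h1 : |∫ y, FF ρ a f y w ∂μ| ≤ ∫ y, |FF ρ a f y w| ∂μ := by
    simpa [Real.norm_eq_abs] using norm_integral_le_integral_norm (μ := μ)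
      (fun y => FF ρ a f y w)
  refine h1.trans (integral_mono_of_nonneg (ae_of_all _ fun y => abs_nonneg _) hfi.abs
    (ae_of_all _ fun y => ?_))
  show |FF ρ a f y w| ≤ |f y|
  rw [FF_abs]
  calc |f y| * psi ρ a y w ≤ |f y| * 1 :=
        mul_le_mul_of_nonneg_left (psi_le_one hρ0 ha.le y w) (abs_nonneg _)
    _ = |f y| := mul_one _

lemma I1_lem (hρ0 : 0 < ρ) (ha : 0 < a) (hf : Continuous f) (hfc : HasCompactSupport f)
    [IsLocallyFiniteMeasure μ] (x : Euc k) :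
    Integrable (Function.uncurry fun y w : Euc k => FF ρ a f x w * FF ρ a f y w)
      (μ.prod volume) := by
  have hfi : Integrable f μ := hf.integrable_of_hasCompactSupport hfc
  have hFc := FF_uncurry_cont hf ρ a
  have hmeas : AEStronglyMeasurable
      (Function.uncurry fun y w : Euc k => FF ρ a f x w * FF ρ a f y w) (μ.prod volume) := by
    apply Continuous.aestronglyMeasurable
    show Continuous fun q : Euc k × Euc k => FF ρ a f x q.2 * FF ρ a f q.1 q.2
    exact (hFc.comp (continuous_const.prodMk continuous_snd)).mul hFc
  rw [integrable_prod_iff hmeas]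
  constructor
  · refine ae_of_all _ fun y => ?_
    show Integrable (fun w => FF ρ a f x w * FF ρ a f y w) volume
    have : (fun w : Euc k => FF ρ a f x w * FF ρ a f y w) = fun w =>
        (f x * gg ρ x * (f y * gg ρ y)) *
          (Real.exp (-(a * ‖x - w‖ ^ 2)) * Real.exp (-(a * ‖y - w‖ ^ 2))) := by
      funext w; simp only [FF, psi]; ring
    rw [this]
    exact (gauss_pair_integrable ha x y).const_mul _
  · apply Integrable.mono'
      (g := fun y => (|f x| * (π / a) ^ ((k : ℝ) / 2)) * |f y|)
      ((hfi.abs).const_mul _)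
    · have hsm : StronglyMeasurable
          (Function.uncurry fun y w : Euc k => ‖FF ρ a f x w * FF ρ a f y w‖) := by
        apply Continuous.stronglyMeasurable
        show Continuous fun q : Euc k × Euc k => ‖FF ρ a f x q.2 * FF ρ a f q.1 q.2‖
        exact ((hFc.comp (continuous_const.prodMk continuous_snd)).mul hFc).norm
      exact hsm.integral_prod_right'.aestronglyMeasurable
    · refine ae_of_all _ fun y => ?_
      have hnn : 0 ≤ ∫ w, ‖FF ρ a f x w * FF ρ a f y w‖ := integral_nonneg fun w => norm_nonneg _
      show ‖∫ w, ‖FF ρ a f x w * FF ρ a f y w‖‖ ≤ _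
      rw [Real.norm_eq_abs, abs_of_nonneg hnn]
      have hb : ∀ w, ‖FF ρ a f x w * FF ρ a f y w‖ ≤
          (|f x| * |f y|) * Real.exp (-(a * ‖y - w‖ ^ 2)) := by
        intro w
        rw [Real.norm_eq_abs, abs_mul, FF_abs, FF_abs]
        have h1 : |f x| * psi ρ a x w ≤ |f x| * 1 :=
          mul_le_mul_of_nonneg_left (psi_le_one hρ0 ha.le x w) (abs_nonneg _)
        have h2 : |f y| * psi ρ a y w ≤ |f y| * Real.exp (-(a * ‖y - w‖ ^ 2)) :=
          mul_le_mul_of_nonneg_left (psi_le_exp hρ0 a y w) (abs_nonneg _)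
        calc |f x| * psi ρ a x w * (|f y| * psi ρ a y w)
            ≤ (|f x| * 1) * (|f y| * Real.exp (-(a * ‖y - w‖ ^ 2))) :=
              mul_le_mul h1 h2 (mul_nonneg (abs_nonneg _) (psi_pos ρ a y w).le)
                (mul_nonneg (abs_nonneg _) zero_le_one)
          _ = (|f x| * |f y|) * Real.exp (-(a * ‖y - w‖ ^ 2)) := by ring
      calc ∫ w, ‖FF ρ a f x w * FF ρ a f y w‖
          ≤ ∫ w, (|f x| * |f y|) * Real.exp (-(a * ‖y - w‖ ^ 2)) :=
            integral_mono_of_nonneg (ae_of_all _ fun w => norm_nonneg _)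
              ((gauss_one_integrable ha y).const_mul _) (ae_of_all _ hb)
        _ = (|f x| * (π / a) ^ ((k : ℝ) / 2)) * |f y| := by
            rw [integral_const_mul, gauss_one_integral ha y]; ring

lemma I2_lem (hρ0 : 0 < ρ) (ha : 0 < a) (hf : Continuous f) (hfc : HasCompactSupport f)
    [IsLocallyFiniteMeasure μ] :
    Integrable (Function.uncurry fun x w : Euc k => FF ρ a f x w * (∫ y, FF ρ a f y w ∂μ))
      (μ.prod volume) := by
  have hfi : Integrable f μ := hf.integrable_of_hasCompactSupport hfc
  have hFc := FF_uncurry_cont hf ρ a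
  have hSm := S_meas hf ρ a μ
  have hB0 : 0 ≤ ∫ y, |f y| ∂μ := integral_nonneg fun y => abs_nonneg _
  have hbd : ∀ x w : Euc k, ‖FF ρ a f x w * (∫ y, FF ρ a f y w ∂μ)‖ ≤
      (|f x| * (∫ y, |f y| ∂μ)) * Real.exp (-(a * ‖x - w‖ ^ 2)) := by
    intro x w
    rw [Real.norm_eq_abs, abs_mul, FF_abs]
    calc |f x| * psi ρ a x w * |∫ y, FF ρ a f y w ∂μ|
        ≤ |f x| * Real.exp (-(a * ‖x - w‖ ^ 2)) * (∫ y, |f y| ∂μ) := by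
          apply mul_le_mul
          · exact mul_le_mul_of_nonneg_left (psi_le_exp hρ0 a x w) (abs_nonneg _)
          · exact S_bound hρ0 ha hf hfc w
          · exact abs_nonneg _
          · positivity
      _ = (|f x| * (∫ y, |f y| ∂μ)) * Real.exp (-(a * ‖x - w‖ ^ 2)) := by ring
  have hmeas : AEStronglyMeasurable
      (Function.uncurry fun x w : Euc k => FF ρ a f x w * (∫ y, FF ρ a f y w ∂μ))
      (μ.prod volume) := by
    have h1 : AEStronglyMeasurable (Function.uncurry (FF ρ a f)) (μ.prod volume) :=
      hFc.aestronglyMeasurable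
    have h2 : AEStronglyMeasurable (fun q : Euc k × Euc k => ∫ y, FF ρ a f y q.2 ∂μ)
        (μ.prod volume) :=
      (hSm.comp_measurable measurable_snd).aestronglyMeasurable
    exact h1.mul h2
  rw [integrable_prod_iff hmeas]
  constructor
  · refine ae_of_all _ fun x => ?_
    show Integrable (fun w => FF ρ a f x w * (∫ y, FF ρ a f y w ∂μ)) volume
    apply Integrable.mono'
      (g := fun w => (|f x| * (∫ y, |f y| ∂μ)) * Real.exp (-(a * ‖x - w‖ ^ 2)))
      ((gauss_one_integrable ha x).const_mul _)
    · exact (FF_cont_right hf ρ a x).aestronglyMeasurable.mul hSm.aestronglyMeasurable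
    · exact ae_of_all _ fun w => hbd x w
  · apply Integrable.mono'
      (g := fun x => ((∫ y, |f y| ∂μ) * (π / a) ^ ((k : ℝ) / 2)) * |f x|)
      ((hfi.abs).const_mul _)
    · have hsm : StronglyMeasurable
          (Function.uncurry fun x w : Euc k => ‖FF ρ a f x w * (∫ y, FF ρ a f y w ∂μ)‖) :=
        ((hFc.stronglyMeasurable.mul (hSm.comp_measurable measurable_snd))).norm
      exact hsm.integral_prod_right'.aestronglyMeasurable
    · refine ae_of_all _ fun x => ?_
      have hnn : 0 ≤ ∫ w, ‖FF ρ a f x w * (∫ y, FF ρ a f y w ∂μ)‖ :=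
        integral_nonneg fun w => norm_nonneg _
      show ‖∫ w, ‖FF ρ a f x w * (∫ y, FF ρ a f y w ∂μ)‖‖ ≤ _
      rw [Real.norm_eq_abs, abs_of_nonneg hnn]
      calc ∫ w, ‖FF ρ a f x w * (∫ y, FF ρ a f y w ∂μ)‖
          ≤ ∫ w, (|f x| * (∫ y, |f y| ∂μ)) * Real.exp (-(a * ‖x - w‖ ^ 2)) :=
            integral_mono_of_nonneg (ae_of_all _ fun w => norm_nonneg _)
              ((gauss_one_integrable ha x).const_mul _) (ae_of_all _ fun w => hbd x w)
        _ = ((∫ y, |f y| ∂μ) * (π / a) ^ ((k : ℝ) / 2)) * |f x| := by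
            rw [integral_const_mul, gauss_one_integral ha x]; ring

lemma part2 {n : ℕ} {ρ a d : ℝ} (hρ0 : 0 < ρ) (ha : 0 < a) (hd : 0 ≤ d)
    (G : Euc (n + 1) → Euc (n + 1) → ℝ)
    (rep : ∀ x y : Euc (n + 1), G x y = d * ∫ w, psi ρ a x w * psi ρ a y w)
    (μ : Measure (Euc (n + 1))) [IsLocallyFiniteMeasure μ]
    (f : Euc (n + 1) → ℝ) (hf : Continuous f) (hfc : HasCompactSupport f) :
    0 ≤ ∫ x, ∫ y, G x y * f x * f y ∂μ ∂μ := by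
  have key : ∀ x : Euc (n + 1),
      ∫ y, G x y * f x * f y ∂μ = d * ∫ w, FF ρ a f x w * (∫ y, FF ρ a f y w ∂μ) := by
    intro x
    have e1 : ∀ y, G x y * f x * f y = d * ∫ w, FF ρ a f x w * FF ρ a f y w := by
      intro y
      have e2 : (fun w : Euc (n + 1) => FF ρ a f x w * FF ρ a f y w)
          = fun w => (f x * f y) * (psi ρ a x w * psi ρ a y w) := by
        funext w; simp only [FF]; ring
      rw [rep x y, e2, integral_const_mul]
      ring
    calc ∫ y, G x y * f x * f y ∂μ
        = ∫ y, (d * ∫ w, FF ρ a f x w * FF ρ a f y w) ∂μ := by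
          simp only [e1]
      _ = d * ∫ y, (∫ w, FF ρ a f x w * FF ρ a f y w) ∂μ := by rw [integral_const_mul]
      _ = d * ∫ w, (∫ y, FF ρ a f x w * FF ρ a f y w ∂μ) := by
          rw [integral_integral_swap (I1_lem hρ0 ha hf hfc x)]
      _ = d * ∫ w, FF ρ a f x w * (∫ y, FF ρ a f y w ∂μ) := by
          simp only [integral_const_mul]
  have e3 : (fun x => ∫ y, G x y * f x * f y ∂μ)
      = fun x => d * ∫ w, FF ρ a f x w * (∫ y, FF ρ a f y w ∂μ) := funext key
  rw [e3, integral_const_mul, integral_integral_swap (I2_lem hρ0 ha hf hfc)]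
  simp only [integral_mul_const]
  exact mul_nonneg hd (integral_nonneg fun w => mul_self_nonneg _)

end Part2

/-- The Mehler kernel is positive semidefinite (Lemma 5.4), both as a finite quadratic
form and when integrated against a continuous compactly supported function with respect to a
locally finite Borel measure. -/
theorem mehler_kernel_positive_semidefinite
    (n : ℕ) (ρ : ℝ) (hρ0 : 0 < ρ) (hρ1 : ρ < 1) :
    let G : Euc (n + 1) → Euc (n + 1) → ℝ := fun x y =>
      (1 - ρ ^ 2) ^ (-((n : ℝ) + 1) / 2) * (2 * π) ^ (-((n : ℝ) + 1)) *
        Real.exp ((-‖x‖ ^ 2 - ‖y‖ ^ 2 + 2 * ρ * ⟪x, y⟫) / (2 * (1 - ρ ^ 2)))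
    (∀ p : ℕ, 1 ≤ p → ∀ (z : Fin p → Euc (n + 1)) (b : Fin p → ℝ),
      0 ≤ ∑ i, ∑ j, b i * b j * G (z i) (z j)) ∧
    (∀ μ : Measure (Euc (n + 1)), IsLocallyFiniteMeasure μ →
      ∀ f : Euc (n + 1) → ℝ, Continuous f → HasCompactSupport f →
        0 ≤ ∫ x, ∫ y, G x y * f x * f y ∂μ ∂μ) := by
  intro G
  have h1 : (0:ℝ) < 1 - ρ ^ 2 := by nlinarith
  have ha : 0 < ρ / (1 - ρ ^ 2) := by positivity
  have hd : 0 ≤ (1 - ρ ^ 2) ^ (-((n : ℝ) + 1) / 2) * (2 * π) ^ (-((n : ℝ) + 1)) /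
      (π / (2 * (ρ / (1 - ρ ^ 2)))) ^ (((n + 1 : ℕ) : ℝ) / 2) := by
    have hπ : (0:ℝ) < π := pi_pos
    positivity
  have rep : ∀ x y : Euc (n + 1), G x y =
      ((1 - ρ ^ 2) ^ (-((n : ℝ) + 1) / 2) * (2 * π) ^ (-((n : ℝ) + 1)) /
        (π / (2 * (ρ / (1 - ρ ^ 2)))) ^ (((n + 1 : ℕ) : ℝ) / 2)) *
      ∫ w, psi ρ (ρ / (1 - ρ ^ 2)) x w * psi ρ (ρ / (1 - ρ ^ 2)) y w :=
    fun x y => mehler_rep n ρ hρ0 hρ1 x y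
  refine ⟨fun p _ z b => part1 ha hd G rep p z b, fun μ hμ f hf hfc => ?_⟩
  haveI := hμ
  exact part2 hρ0 ha hd G rep μ f hf hfc
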